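/- (Lemma 4.2) Let G be a countably infinite group, ν a multiorder on G, and J : Õ → ℝ a bounded Borel measurable function. Then for every j ∈ ℕ, ∫ J(g_≺(≺)) dν(≺) = ∫ J(≺) dν(≺), where for each ≺ ∈ Õ, g_≺ = bi_≺(j) and g_≺(≺) denotes the action of the group element g_≺ on the order ≺. -/

import Mathlib

open MeasureTheory
open scoped Classical

/-- An *order of type ℤ* on `G`. -/
def IsZOrder {G : Type*} (r : G → G → Prop) : Prop :=
  IsStrictTotalOrder G r ∧ (∀ a b : G, {g : G | r a g ∧ r g b}.Finite) ∧
    (∀ a : G, ∃ b, r b a) ∧ (∀ a : G, ∃ b, r a b)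

/-- The relation on `G` encoded by an element of `{0,1}^{G×G}`. -/
def relOf {G : Type*} (x : G × G → Bool) : G → G → Prop := fun a b => x (a, b) = true

/-- The set `Õ` of orders of type ℤ on `G`, as a subset of `{0,1}^{G×G}`. -/
def ZOrders (G : Type*) : Set (G × G → Bool) := {x | IsZOrder (relOf x)}

/-- The `G`-action on `{0,1}^{G×G}` corresponding to `a (g(≺)) b ⟺ ag ≺ bg`. -/
def actB {G : Type*} [Group G] (g : G) (x : G × G → Bool) : G × G → Bool :=
  fun p => x (p.1 * g, p.2 * g)

/-- `f : ℤ → G` is an anchored order isomorphism from `(ℤ,<)` to `(G,r)`. -/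
def IsAnchoredIso {G : Type*} [One G] (r : G → G → Prop) (f : ℤ → G) : Prop :=
  Function.Bijective f ∧ f 0 = 1 ∧ ∀ i j : ℤ, i < j ↔ r (f i) (f j)

/-- The anchored bijection `bi_≺ : ℤ → G` associated with an order of type ℤ. -/
noncomputable def biOf {G : Type*} [One G] (r : G → G → Prop) : ℤ → G :=
  if h : ∃ f : ℤ → G, IsAnchoredIso r f then h.choose else fun _ => 1

set_option linter.unusedSectionVars false

section Aux
variable {G : Type*} [One G] {r : G → G → Prop} {f : ℤ → G}

theorem anchored_rel_iff (hf : IsAnchoredIso r f) (a b : G) :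
    r a b ↔ (Equiv.ofBijective f hf.1).symm a < (Equiv.ofBijective f hf.1).symm b := by
  set E := Equiv.ofBijective f hf.1 with hE
  have ha : f (E.symm a) = a := E.apply_symm_apply a
  have hb : f (E.symm b) = b := E.apply_symm_apply b
  conv_lhs => rw [← ha, ← hb]
  exact (hf.2.2 _ _).symm

theorem anchored_symm_apply (hf : IsAnchoredIso r f) (m : ℤ) :
    (Equiv.ofBijective f hf.1).symm (f m) = m :=
  (Equiv.ofBijective f hf.1).symm_apply_apply m

theorem strictMono_int_fix (ψ : ℤ → ℤ) (hψ : StrictMono ψ) (h0 : ψ 0 = 0) :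
    (∀ n, 0 ≤ n → n ≤ ψ n) ∧ (∀ n, n ≤ 0 → ψ n ≤ n) := by
  have key : ∀ k : ℕ, ((k : ℤ) ≤ ψ k ∧ ψ (-(k : ℤ)) ≤ -(k : ℤ)) := by
    intro k
    induction k with
    | zero => simp [h0]
    | succ m ih =>
      have h1 : ψ (m : ℤ) < ψ ((m : ℤ) + 1) := hψ (lt_add_one _)
      have h2 : ψ (-(m : ℤ) - 1) < ψ (-(m : ℤ)) := hψ (by omega)
      constructor
      · push_cast; omega
      · push_cast; rw [show -((m : ℤ) + 1) = -(m : ℤ) - 1 by ring]; omega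
  constructor
  · intro n hn
    have := (key n.toNat).1
    rwa [Int.toNat_of_nonneg hn] at this
  · intro n hn
    have := (key (-n).toNat).2
    rw [Int.toNat_of_nonneg (by omega)] at this
    simpa using this

theorem anchored_unique {G : Type*} [One G] {r : G → G → Prop} {f f' : ℤ → G}
    (hf : IsAnchoredIso r f) (hf' : IsAnchoredIso r f') : f = f' := by
  obtain ⟨hb, h0, hiff⟩ := hf
  obtain ⟨hb', h0', hiff'⟩ := hf'
  let E := Equiv.ofBijective f hb
  let E' := Equiv.ofBijective f' hb'
  set ψ : ℤ → ℤ := fun n => E'.symm (f n) with hψdef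
  set ψ' : ℤ → ℤ := fun n => E.symm (f' n) with hψ'def
  have hfE : ∀ n, f' (ψ n) = f n := fun n => E'.apply_symm_apply (f n)
  have hfE' : ∀ n, f (ψ' n) = f' n := fun n => E.apply_symm_apply (f' n)
  have hψmono : StrictMono ψ := by
    intro a b hab
    rw [hiff' (ψ a) (ψ b), hfE, hfE, ← hiff]; exact hab
  have hψ'mono : StrictMono ψ' := by
    intro a b hab
    rw [hiff (ψ' a) (ψ' b), hfE', hfE', ← hiff']; exact hab
  have hψψ' : ∀ n, ψ' (ψ n) = n := by
    intro n; have : f (ψ' (ψ n)) = f n := by rw [hfE', hfE]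
    exact hb.1 this
  have hψ0 : ψ 0 = 0 := by
    have : f' (ψ 0) = f' 0 := by rw [hfE, h0, h0']
    exact hb'.1 this
  have hψ'0 : ψ' 0 = 0 := by
    have := hψψ' 0; rwa [hψ0] at this
  obtain ⟨hp, hm⟩ := strictMono_int_fix ψ hψmono hψ0
  obtain ⟨hp', hm'⟩ := strictMono_int_fix ψ' hψ'mono hψ'0
  have hid : ∀ n, ψ n = n := by
    intro n
    rcases le_or_gt 0 n with hn | hn
    · have h1 := hp n hn
      have h2 := hp' (ψ n) (le_trans hn h1)
      rw [hψψ'] at h2; omega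
    · have h1 := hm n hn.le
      have h2 := hm' (ψ n) (le_trans h1 hn.le)
      rw [hψψ'] at h2; omega
  funext n
  rw [← hfE n, hid]

theorem isZOrder_of_anchored (hf : IsAnchoredIso r f) : IsZOrder r := by
  set E := Equiv.ofBijective f hf.1 with hE
  have hiff := anchored_rel_iff hf
  refine ⟨{ trichotomous := ?_, irrefl := ?_, trans := ?_ }, ?_, ?_, ?_⟩
  · intro a b hab hba
    rcases lt_trichotomy ((Equiv.ofBijective f hf.1).symm a)
      ((Equiv.ofBijective f hf.1).symm b) with h | h | h
    · exact absurd ((hiff a b).mpr h) hab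
    · exact (Equiv.ofBijective f hf.1).symm.injective h
    · exact absurd ((hiff b a).mpr h) hba
  · exact fun a ha => lt_irrefl _ ((hiff a a).mp ha)
  · exact fun a b c hab hbc =>
      (hiff a c).mpr (lt_trans ((hiff a b).mp hab) ((hiff b c).mp hbc))
  · intro a b
    have heq : {g : G | r a g ∧ r g b} = (Equiv.ofBijective f hf.1).symm ⁻¹'
        Set.Ioo ((Equiv.ofBijective f hf.1).symm a) ((Equiv.ofBijective f hf.1).symm b) := by
      ext g
      constructor
      · rintro ⟨h1, h2⟩; exact ⟨(hiff a g).mp h1, (hiff g b).mp h2⟩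
      · rintro ⟨h1, h2⟩; exact ⟨(hiff a g).mpr h1, (hiff g b).mpr h2⟩
    rw [heq]
    exact Set.Finite.preimage (Equiv.ofBijective f hf.1).symm.injective.injOn
      (Set.finite_Ioo _ _)
  · intro a
    refine ⟨f ((Equiv.ofBijective f hf.1).symm a - 1), ?_⟩
    rw [hiff, anchored_symm_apply hf]
    omega
  · intro a
    refine ⟨f ((Equiv.ofBijective f hf.1).symm a + 1), ?_⟩
    rw [hiff, anchored_symm_apply hf]
    omega

theorem biOf_eq (hf : IsAnchoredIso r f) : biOf r = f := by
  have h : ∃ f : ℤ → G, IsAnchoredIso r f := ⟨f, hf⟩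
  rw [biOf, dif_pos h]
  exact anchored_unique h.choose_spec hf

theorem succ_char (hf : IsAnchoredIso r f) (k : ℤ) (g : G) :
    f (k + 1) = g ↔ (r (f k) g ∧ ∀ h, ¬(r (f k) h ∧ r h g)) := by
  constructor
  · rintro rfl
    refine ⟨(hf.2.2 k (k + 1)).mp (lt_add_one k), fun h ⟨h1, h2⟩ => ?_⟩
    obtain ⟨m, rfl⟩ := hf.1.2 h
    have := (hf.2.2 k m).mpr h1
    have := (hf.2.2 m (k + 1)).mpr h2
    omega
  · rintro ⟨h1, h2⟩
    obtain ⟨m, rfl⟩ := hf.1.2 g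
    have hkm : k < m := (hf.2.2 k m).mpr h1
    by_contra hne
    have hm : k + 1 < m := by
      rcases lt_or_eq_of_le (by omega : k + 1 ≤ m) with h | h
      · exact h
      · exact absurd (congrArg f h) hne
    exact h2 (f (k + 1)) ⟨(hf.2.2 k (k + 1)).mp (lt_add_one k), (hf.2.2 (k + 1) m).mp hm⟩

end Aux

theorem exists_anchored_iso {G : Type*} [One G] {r : G → G → Prop} (hr : IsZOrder r) :
    ∃ f : ℤ → G, IsAnchoredIso r f := by
  obtain ⟨hsto, hfin, hmin, hmax⟩ := hr
  haveI := hsto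
  letI : LinearOrder G := linearOrderOfSTO r
  have hlt : ∀ a b : G, a < b ↔ r a b := fun a b => Iff.rfl
  letI : LocallyFiniteOrder G := LocallyFiniteOrder.ofFiniteIcc (fun a b => by
    have : Set.Icc a b ⊆ {a, b} ∪ {g : G | r a g ∧ r g b} := by
      intro g hg
      rcases eq_or_lt_of_le hg.1 with h1 | h1
      · exact Or.inl (Or.inl h1.symm)
      rcases eq_or_lt_of_le hg.2 with h2 | h2
      · exact Or.inl (Or.inr h2)
      exact Or.inr ⟨h1, h2⟩
    exact Set.Finite.subset (((Set.finite_singleton b).insert a).union (hfin a b)) this)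
  haveI : NoMinOrder G := ⟨fun a => by obtain ⟨b, hb⟩ := hmin a; exact ⟨b, hb⟩⟩
  haveI : NoMaxOrder G := ⟨fun a => by obtain ⟨b, hb⟩ := hmax a; exact ⟨b, hb⟩⟩
  haveI : Nonempty G := ⟨1⟩
  letI : SuccOrder G := LinearLocallyFiniteOrder.succOrder G
  letI : PredOrder G := LinearLocallyFiniteOrder.predOrder G
  let e : G ≃o ℤ := orderIsoIntOfLinearSuccPredArch
  refine ⟨fun i => e.symm (i + e 1), ⟨?_, ?_⟩, by simp, ?_⟩
  · intro i k h
    simpa using congrArg e h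
  · intro g
    exact ⟨e g - e 1, by simp⟩
  · intro i k
    rw [← hlt]
    simp [e.symm.lt_iff_lt]

section Aux2
variable {G : Type*} [One G] {r : G → G → Prop} {f : ℤ → G}

theorem biOf_spec' (hr : IsZOrder r) : IsAnchoredIso r (biOf r) := by
  obtain ⟨f, hf⟩ := exists_anchored_iso hr
  rw [biOf_eq hf]; exact hf

theorem zOrder_iff_exists : IsZOrder r ↔ ∃ f : ℤ → G, IsAnchoredIso r f :=
  ⟨exists_anchored_iso, fun ⟨_, hf⟩ => isZOrder_of_anchored hf⟩

theorem biOf_of_not (h : ¬ IsZOrder r) : biOf r = fun _ => (1 : G) := by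
  rw [biOf, dif_neg (fun hex => h (zOrder_iff_exists.mpr hex))]

theorem pred_char (hf : IsAnchoredIso r f) (k : ℤ) (g : G) :
    f (k - 1) = g ↔ (r g (f k) ∧ ∀ h, ¬(r g h ∧ r h (f k))) := by
  constructor
  · rintro rfl
    refine ⟨(hf.2.2 (k - 1) k).mp (by omega), fun h ⟨h1, h2⟩ => ?_⟩
    obtain ⟨m, rfl⟩ := hf.1.2 h
    have := (hf.2.2 (k - 1) m).mpr h1
    have := (hf.2.2 m k).mpr h2
    omega
  · rintro ⟨h1, h2⟩
    obtain ⟨m, rfl⟩ := hf.1.2 g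
    have hkm : m < k := (hf.2.2 m k).mpr h1
    by_contra hne
    have hm : m < k - 1 := by
      rcases lt_or_eq_of_le (by omega : m ≤ k - 1) with h | h
      · exact h
      · exact absurd (congrArg f h).symm hne
    exact h2 (f (k - 1)) ⟨(hf.2.2 m (k - 1)).mp hm, (hf.2.2 (k - 1) k).mp (by omega)⟩

end Aux2

section Grp
variable {G : Type*} [Group G]

theorem actB_actB (g h : G) (x : G × G → Bool) : actB h (actB g x) = actB (h * g) x := by
  funext p; simp [actB, mul_assoc]

theorem actB_one (x : G × G → Bool) : actB (1 : G) x = x := by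
  funext p; simp [actB]

theorem relOf_actB (g : G) (x : G × G → Bool) (a b : G) :
    relOf (actB g x) a b ↔ relOf x (a * g) (b * g) := Iff.rfl

/-- Shift: if `f` is the anchored iso for `x` then `i ↦ f (i+k) * (f k)⁻¹`
is the anchored iso for `actB (f k) x`. -/
theorem anchored_shift {x : G × G → Bool} {f : ℤ → G}
    (hf : IsAnchoredIso (relOf x) f) (k : ℤ) :
    IsAnchoredIso (relOf (actB (f k) x)) (fun i => f (i + k) * (f k)⁻¹) := by
  refine ⟨?_, by simp, ?_⟩
  · have h1 : Function.Bijective (fun i : ℤ => i + k) :=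
      (Equiv.addRight k).bijective
    have h2 : Function.Bijective (fun a : G => a * (f k)⁻¹) :=
      (Equiv.mulRight (f k)⁻¹).bijective
    exact h2.comp (hf.1.comp h1)
  · intro i j
    rw [relOf_actB]
    simp only [inv_mul_cancel_right]
    rw [← hf.2.2]
    omega

theorem biOf_shift {x : G × G → Bool} (hx : x ∈ ZOrders G) (k : ℤ) :
    actB (biOf (relOf x) k) x ∈ ZOrders G ∧
    ∀ i : ℤ, biOf (relOf (actB (biOf (relOf x) k) x)) i
      = biOf (relOf x) (i + k) * (biOf (relOf x) k)⁻¹ := by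
  have hbi := biOf_spec' hx
  have hs := anchored_shift hbi k
  exact ⟨isZOrder_of_anchored hs, fun i => by rw [biOf_eq hs]⟩

end Grp

section MeasHelpers
variable {X : Type*} [MeasurableSpace X]

theorem mAll {ι : Sort*} [Countable ι] {P : ι → X → Prop}
    (h : ∀ a, MeasurableSet {x | P a x}) : MeasurableSet {x | ∀ a, P a x} := by
  rw [Set.setOf_forall]; exact MeasurableSet.iInter h

theorem mEx {ι : Sort*} [Countable ι] {P : ι → X → Prop}
    (h : ∀ a, MeasurableSet {x | P a x}) : MeasurableSet {x | ∃ a, P a x} := by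
  rw [Set.setOf_exists]; exact MeasurableSet.iUnion h

theorem mAnd {P Q : X → Prop} (hP : MeasurableSet {x | P x})
    (hQ : MeasurableSet {x | Q x}) : MeasurableSet {x | P x ∧ Q x} := by
  rw [Set.setOf_and]; exact hP.inter hQ

theorem mOr {P Q : X → Prop} (hP : MeasurableSet {x | P x})
    (hQ : MeasurableSet {x | Q x}) : MeasurableSet {x | P x ∨ Q x} := by
  rw [Set.setOf_or]; exact hP.union hQ

theorem mNot {P : X → Prop} (hP : MeasurableSet {x | P x}) :
    MeasurableSet {x | ¬ P x} := hP.compl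

theorem mConst {p : Prop} : MeasurableSet {_x : X | p} := by
  by_cases h : p <;> simp [h]

theorem mImp {P Q : X → Prop} (hP : MeasurableSet {x | P x})
    (hQ : MeasurableSet {x | Q x}) : MeasurableSet {x | P x → Q x} := by
  have : {x | P x → Q x} = {x | ¬ P x ∨ Q x} := by
    ext x; exact imp_iff_not_or
  rw [this]; exact mOr (mNot hP) hQ

theorem mIff {P Q : X → Prop} (hP : MeasurableSet {x | P x})
    (hQ : MeasurableSet {x | Q x}) : MeasurableSet {x | P x ↔ Q x} := by
  have : {x | P x ↔ Q x} = {x | (P x → Q x) ∧ (Q x → P x)} := by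
    ext x; exact iff_iff_implies_and_implies
  rw [this]; exact mAnd (mImp hP hQ) (mImp hQ hP)

end MeasHelpers

theorem isZOrder_iff' {G : Type*} (r : G → G → Prop) :
    IsZOrder r ↔ ((∀ a b : G, r a b ∨ a = b ∨ r b a) ∧ (∀ a : G, ¬ r a a) ∧
      (∀ a b c : G, r a b → r b c → r a c)) ∧
      (∀ a b : G, ∃ s : Finset G, ∀ h : G, (r a h ∧ r h b) ↔ h ∈ s) ∧
      (∀ a : G, ∃ b, r b a) ∧ (∀ a : G, ∃ b, r a b) := by
  constructor
  · rintro ⟨hsto, hfin, hmin, hmax⟩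
    haveI := hsto
    refine ⟨⟨fun a b => trichotomous_of r a b, fun a => irrefl_of r a,
      fun a b c => trans_of r⟩, fun a b => ?_, hmin, hmax⟩
    exact ⟨(hfin a b).toFinset, fun h => by
      rw [Set.Finite.mem_toFinset]; rfl⟩
  · rintro ⟨⟨htri, hirr, htrans⟩, hfin, hmin, hmax⟩
    refine ⟨{ trichotomous := fun a b h1 h2 => ((htri a b).resolve_left h1).resolve_right h2, irrefl := hirr, trans := htrans }, fun a b => ?_, hmin, hmax⟩
    obtain ⟨s, hs⟩ := hfin a b
    have : {g : G | r a g ∧ r g b} = ↑s := by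
      ext g; rw [Set.mem_setOf_eq, hs g]; rfl
    rw [this]; exact s.finite_toSet

theorem measurableSet_rel {G : Type*} (a b : G) :
    MeasurableSet {x : G × G → Bool | relOf x a b} := by
  have : {x : G × G → Bool | relOf x a b} = (fun x : G × G → Bool => x (a, b)) ⁻¹' {true} := by
    ext x; simp [relOf]
  rw [this]
  exact (measurable_pi_apply (a, b)) (measurableSet_singleton true)

theorem measurableSet_zOrders (G : Type*) [Countable G] :
    MeasurableSet (ZOrders G) := by
  have : ZOrders G = {x : G × G → Bool |
      ((∀ a b : G, relOf x a b ∨ a = b ∨ relOf x b a) ∧ (∀ a : G, ¬ relOf x a a) ∧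
        (∀ a b c : G, relOf x a b → relOf x b c → relOf x a c)) ∧
      (∀ a b : G, ∃ s : Finset G, ∀ h : G, (relOf x a h ∧ relOf x h b) ↔ h ∈ s) ∧
      (∀ a : G, ∃ b, relOf x b a) ∧ (∀ a : G, ∃ b, relOf x a b)} := by
    ext x; exact isZOrder_iff' (relOf x)
  rw [this]
  refine mAnd (mAnd (mAll fun a => mAll fun b =>
      mOr (measurableSet_rel a b) (mOr mConst (measurableSet_rel b a)))
    (mAnd (mAll fun a => mNot (measurableSet_rel a a))
      (mAll fun a => mAll fun b => mAll fun c =>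
        mImp (measurableSet_rel a b) (mImp (measurableSet_rel b c) (measurableSet_rel a c)))))
    (mAnd (mAll fun a => mAll fun b => mEx fun s => mAll fun h =>
      mIff (mAnd (measurableSet_rel a h) (measurableSet_rel h b)) mConst)
    (mAnd (mAll fun a => mEx fun b => measurableSet_rel b a)
      (mAll fun a => mEx fun b => measurableSet_rel a b)))

section BiSet
variable {G : Type*} [Group G] [Countable G]

/-- The sets `P k g = {x ∈ Õ : bi_x(k) = g}`. -/
def biSet (G : Type*) [Group G] (k : ℤ) (g : G) : Set (G × G → Bool) :=
  {x | x ∈ ZOrders G ∧ biOf (relOf x) k = g}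

theorem biSet_succ (k : ℤ) (g : G) :
    biSet G (k + 1) g = ⋃ g' : G, biSet G k g' ∩
      ({x | relOf x g' g} ∩ ⋂ h : G, {x | relOf x g' h ∧ relOf x h g}ᶜ) := by
  ext x
  simp only [biSet, Set.mem_iUnion, Set.mem_inter_iff, Set.mem_setOf_eq, Set.mem_iInter,
    Set.mem_compl_iff]
  constructor
  · rintro ⟨hx, rfl⟩
    have hf := biOf_spec' hx
    obtain ⟨h1, h2⟩ := (succ_char hf k (biOf (relOf x) (k + 1))).mp rfl
    exact ⟨biOf (relOf x) k, ⟨hx, rfl⟩, h1, fun h hh => h2 h hh⟩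
  · rintro ⟨g', ⟨hx, rfl⟩, h1, h2⟩
    have hf := biOf_spec' hx
    exact ⟨hx, (succ_char hf k g).mpr ⟨h1, fun h hh => h2 h hh⟩⟩

theorem biSet_pred (k : ℤ) (g : G) :
    biSet G (k - 1) g = ⋃ g' : G, biSet G k g' ∩
      ({x | relOf x g g'} ∩ ⋂ h : G, {x | relOf x g h ∧ relOf x h g'}ᶜ) := by
  ext x
  simp only [biSet, Set.mem_iUnion, Set.mem_inter_iff, Set.mem_setOf_eq, Set.mem_iInter,
    Set.mem_compl_iff]
  constructor
  · rintro ⟨hx, rfl⟩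
    have hf := biOf_spec' hx
    obtain ⟨h1, h2⟩ := (pred_char hf k (biOf (relOf x) (k - 1))).mp rfl
    exact ⟨biOf (relOf x) k, ⟨hx, rfl⟩, h1, fun h hh => h2 h hh⟩
  · rintro ⟨g', ⟨hx, rfl⟩, h1, h2⟩
    have hf := biOf_spec' hx
    exact ⟨hx, (pred_char hf k g).mpr ⟨h1, fun h hh => h2 h hh⟩⟩

theorem measurableSet_biSet : ∀ (k : ℤ) (g : G), MeasurableSet (biSet G k g) := by
  have base : ∀ g' g : G, MeasurableSet
      ({x : G × G → Bool | relOf x g' g} ∩ ⋂ h : G, {x | relOf x g' h ∧ relOf x h g}ᶜ) :=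
    fun g' g => (measurableSet_rel g' g).inter (MeasurableSet.iInter fun h =>
      (mAnd (measurableSet_rel g' h) (measurableSet_rel h g)).compl)
  have base0 : ∀ g : G, MeasurableSet (biSet G 0 g) := by
    intro g
    rcases eq_or_ne g 1 with rfl | hne
    · have : biSet G 0 1 = ZOrders G := by
        ext x
        exact ⟨fun h => h.1, fun h => ⟨h, (biOf_spec' h).2.1⟩⟩
      rw [this]; exact measurableSet_zOrders G
    · have : biSet G 0 g = ∅ := by
        ext x
        simp only [biSet, Set.mem_setOf_eq, Set.mem_empty_iff_false, iff_false, not_and]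
        intro hx hbi
        exact hne (hbi ▸ (biOf_spec' hx).2.1)
      rw [this]; exact MeasurableSet.empty
  have stepUp : ∀ k : ℤ, (∀ g : G, MeasurableSet (biSet G k g)) →
      ∀ g : G, MeasurableSet (biSet G (k + 1) g) := by
    intro k ih g
    rw [biSet_succ]
    exact MeasurableSet.iUnion fun g' => (ih g').inter (base g' g)
  have stepDown : ∀ k : ℤ, (∀ g : G, MeasurableSet (biSet G k g)) →
      ∀ g : G, MeasurableSet (biSet G (k - 1) g) := by
    intro k ih g
    rw [biSet_pred]
    exact MeasurableSet.iUnion fun g' => (ih g').inter (base g g')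
  intro k
  induction k using Int.induction_on with
  | zero => exact base0
  | succ i ih => exact stepUp i ih
  | pred i ih => exact stepDown (-i) ih

end BiSet


/-- Lemma 4.2: for a multiorder `ν` on `G` and a bounded measurable `J : Õ → ℝ`,
`∫ J(j^≺(≺)) dν(≺) = ∫ J(≺) dν(≺)` for every `j ∈ ℕ`, where `j^≺ = bi_≺(j)`. -/
theorem integral_along_orbit_of_multiorder {G : Type*} [Group G] [Countable G]
    [Infinite G] (ν : Measure (G × G → Bool)) [IsProbabilityMeasure ν]
    (hsupp : ν (ZOrders G) = 1)
    (hinv : ∀ g : G, Measure.map (actB g) ν = ν)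
    (J : (G × G → Bool) → ℝ) (hJmeas : Measurable J)
    (C : ℝ) (hJbdd : ∀ x, |J x| ≤ C) (j : ℕ) :
    ∫ x, J (actB (biOf (relOf x) (j : ℤ)) x) ∂ν = ∫ x, J x ∂ν := by
  letI : MeasurableSpace G := ⊤
  haveI : MeasurableSingletonClass G := ⟨fun _ => trivial⟩
  have hO : MeasurableSet (ZOrders G) := measurableSet_zOrders G
  have hOc : ν (ZOrders G)ᶜ = 0 := by
    rw [measure_compl hO (measure_ne_top ν _), measure_univ, hsupp, tsub_self]
  have hact : ∀ g : G, Measurable (actB g : (G × G → Bool) → (G × G → Bool)) := by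
    intro g
    exact measurable_pi_lambda _ fun p => measurable_pi_apply _
  have hJsm : AEStronglyMeasurable J ν := hJmeas.aestronglyMeasurable
  have hJint : Integrable J ν :=
    ⟨hJsm, HasFiniteIntegral.of_bounded (C := C)
      (Filter.Eventually.of_forall fun x => by simpa [Real.norm_eq_abs] using hJbdd x)⟩
  set β : (G × G → Bool) → G := fun x => biOf (relOf x) (j : ℤ) with hβdef
  -- fibers of β
  have hfiber : ∀ g : G, β ⁻¹' {g} =
      biSet G (j : ℤ) g ∪ ((ZOrders G)ᶜ ∩ {_x | g = 1}) := by
    intro g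
    ext x
    simp only [Set.mem_preimage, Set.mem_singleton_iff, Set.mem_union, Set.mem_inter_iff,
      Set.mem_compl_iff, Set.mem_setOf_eq, biSet, hβdef]
    constructor
    · intro hx
      by_cases hz : x ∈ ZOrders G
      · exact Or.inl ⟨hz, hx⟩
      · refine Or.inr ⟨hz, ?_⟩
        rw [← hx, biOf_of_not hz]
    · rintro (⟨hz, hbi⟩ | ⟨hz, rfl⟩)
      · exact hbi
      · rw [biOf_of_not hz]
  have hβmeas : Measurable β := by
    intro S _
    have : β ⁻¹' S = ⋃ g ∈ S, β ⁻¹' {g} := by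
      ext x; simp
    rw [this]
    refine MeasurableSet.biUnion S.to_countable fun g _ => ?_
    rw [hfiber g]
    exact (measurableSet_biSet _ _).union (hO.compl.inter mConst)
  -- measurability of the integrand
  have hφmeas : Measurable fun x => J (actB (β x) x) := by
    have h1 : Measurable fun q : (G × G → Bool) × G => J (actB q.2 q.1) :=
      measurable_from_prod_countable_left fun g => hJmeas.comp (hact g)
    exact h1.comp (measurable_id.prodMk hβmeas)
  have hφint : Integrable (fun x => J (actB (β x) x)) ν :=
    ⟨hφmeas.aestronglyMeasurable, HasFiniteIntegral.of_bounded (C := C)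
      (Filter.Eventually.of_forall fun x => by simpa [Real.norm_eq_abs] using hJbdd _)⟩
  set A : G → Set (G × G → Bool) := fun g => biSet G (j : ℤ) g with hAdef
  set B : G → Set (G × G → Bool) := fun g => biSet G (-(j : ℤ)) g⁻¹ with hBdef
  have hAmeas : ∀ g, MeasurableSet (A g) := fun g => measurableSet_biSet _ _
  have hBmeas : ∀ g, MeasurableSet (B g) := fun g => measurableSet_biSet _ _
  -- the key identity
  have key : ∀ g : G, A g = ZOrders G ∩ actB g ⁻¹' (B g) := by
    intro g
    ext x
    simp only [hAdef, hBdef, biSet, Set.mem_inter_iff, Set.mem_preimage, Set.mem_setOf_eq]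
    constructor
    · rintro ⟨hx, hbi⟩
      obtain ⟨hmem, hshift⟩ := biOf_shift hx (j : ℤ)
      rw [hbi] at hmem hshift
      refine ⟨hx, hmem, ?_⟩
      rw [hshift (-(j : ℤ)), neg_add_cancel, (biOf_spec' hx).2.1, one_mul]
    · rintro ⟨hx, hy, hybi⟩
      obtain ⟨hmem2, hshift2⟩ := biOf_shift hy (-(j : ℤ))
      rw [hybi] at hmem2 hshift2
      have hx' : actB g⁻¹ (actB g x) = x := by
        rw [actB_actB, inv_mul_cancel, actB_one]
      have := hshift2 (j : ℤ)
      rw [hx', add_neg_cancel, (biOf_spec' hy).2.1, one_mul, inv_inv] at this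
      exact ⟨hx, this⟩
  -- partitions
  have hAsub : ∀ g, A g ⊆ ZOrders G := fun g x hx => hx.1
  have hBsub : ∀ g, B g ⊆ ZOrders G := fun g x hx => hx.1
  have hAdisj : Pairwise (Function.onFun Disjoint A) := by
    intro g g' hne
    rw [Function.onFun, Set.disjoint_left]
    rintro x ⟨_, h1⟩ ⟨_, h2⟩
    exact hne (h1 ▸ h2)
  have hBdisj : Pairwise (Function.onFun Disjoint B) := by
    intro g g' hne
    rw [Function.onFun, Set.disjoint_left]
    rintro x ⟨_, h1⟩ ⟨_, h2⟩
    exact hne (inv_injective (h1 ▸ h2))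
  have hAunion : (⋃ g, A g) = ZOrders G := by
    refine Set.Subset.antisymm (Set.iUnion_subset hAsub) fun x hx => ?_
    exact Set.mem_iUnion.mpr ⟨biOf (relOf x) (j : ℤ), hx, rfl⟩
  have hBunion : (⋃ g, B g) = ZOrders G := by
    refine Set.Subset.antisymm (Set.iUnion_subset hBsub) fun x hx => ?_
    exact Set.mem_iUnion.mpr ⟨(biOf (relOf x) (-(j : ℤ)))⁻¹, hx, (inv_inv _).symm⟩
  -- per-piece computation
  have piece : ∀ g : G, ∫ x in A g, J (actB (β x) x) ∂ν = ∫ x in B g, J x ∂ν := by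
    intro g
    have e1 : ∫ x in A g, J (actB (β x) x) ∂ν = ∫ x in A g, J (actB g x) ∂ν := by
      refine setIntegral_congr_fun (hAmeas g) fun x hx => ?_
      rw [hβdef]
      simp only
      rw [hx.2]
    have haeeq : A g =ᵐ[ν] actB g ⁻¹' (B g) := by
      rw [MeasureTheory.ae_eq_set]
      constructor
      · have : A g \ actB g ⁻¹' (B g) = ∅ := by
          rw [Set.diff_eq_empty]
          rw [key g]
          exact Set.inter_subset_right
        rw [this, measure_empty]
      · refine measure_mono_null ?_ hOc
        intro x hx
        rcases hx with ⟨hpre, hnA⟩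
        intro hxO
        exact hnA ((key g).symm ▸ ⟨hxO, hpre⟩)
    have e2 : ∫ x in A g, J (actB g x) ∂ν = ∫ x in actB g ⁻¹' (B g), J (actB g x) ∂ν :=
      setIntegral_congr_set haeeq
    have hJsm' : AEStronglyMeasurable J (Measure.map (actB g) ν) := by
      rw [hinv g]; exact hJsm
    have e3 : ∫ x in actB g ⁻¹' (B g), J (actB g x) ∂ν
        = ∫ y in B g, J y ∂(Measure.map (actB g) ν) :=
      (setIntegral_map (hBmeas g) hJsm' (hact g).aemeasurable).symm
    rw [e1, e2, e3, hinv g]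
  -- put everything together
  calc ∫ x, J (actB (β x) x) ∂ν
      = ∫ x in Set.univ, J (actB (β x) x) ∂ν := (setIntegral_univ).symm
    _ = ∫ x in ZOrders G, J (actB (β x) x) ∂ν :=
        setIntegral_congr_set (MeasureTheory.ae_eq_univ.mpr hOc).symm
    _ = ∑' g : G, ∫ x in A g, J (actB (β x) x) ∂ν := by
        rw [← hAunion]
        exact integral_iUnion hAmeas hAdisj hφint.integrableOn
    _ = ∑' g : G, ∫ x in B g, J x ∂ν := tsum_congr piece
    _ = ∫ x in ZOrders G, J x ∂ν := by
        rw [← hBunion]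
        exact (integral_iUnion hBmeas hBdisj hJint.integrableOn).symm
    _ = ∫ x in Set.univ, J x ∂ν :=
        setIntegral_congr_set (MeasureTheory.ae_eq_univ.mpr hOc)
    _ = ∫ x, J x ∂ν := setIntegral_univ
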